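/- (Lemma 1.) Let p, q, r be integers with p, q, r ≥ 3 that are relatively prime in pairs. For every integer m with m < pqr, the coefficient a_m of Q_{p,q,r} satisfies a_m = Σ_{m−p < n ≤ m} ( χ(n) − χ(n−q) − χ(n−r) + χ(n−q−r) ), where χ = χ_{p,q,r} and a_m is interpreted as 0 for m < 0 and m > (p−1)(q−1)(r−1). -/

import Mathlib

open Polynomial Classical

/-- Denominator `(X^{pq}-1)(X^{qr}-1)(X^{rp}-1)(X-1)` of the ternary
inclusion-exclusion polynomial. -/
noncomputable def incexcD (p q r : ℕ) : Polynomial ℤ :=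
  (X ^ (p * q) - 1) * (X ^ (q * r) - 1) * (X ^ (r * p) - 1) * (X - 1)

/-- Numerator `(X^{pqr}-1)(X^p-1)(X^q-1)(X^r-1)` of the ternary
inclusion-exclusion polynomial. -/
noncomputable def incexcN (p q r : ℕ) : Polynomial ℤ :=
  (X ^ (p * q * r) - 1) * (X ^ p - 1) * (X ^ q - 1) * (X ^ r - 1)

/-- The coefficient of a polynomial at an integer index, interpreted as `0`
for negative indices (and automatically `0` beyond the degree). -/
noncomputable def coeffZ (Q : Polynomial ℤ) (m : ℤ) : ℤ :=
  if 0 ≤ m then Q.coeff m.toNat else 0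

/-- `chi p q r n = 1` if `n` is `{p,q,r}`-representable, i.e. if in the unique
representation `n = x·qr + y·rp + z·pq + δ·pqr` with `0 ≤ x < p`, `0 ≤ y < q`,
`0 ≤ z < r`, the integer `δ` is nonnegative; `chi p q r n = 0` otherwise. -/
noncomputable def chi (p q r : ℕ) (n : ℤ) : ℤ :=
  if ∃ x y z δ : ℤ, 0 ≤ x ∧ x < p ∧ 0 ≤ y ∧ y < q ∧ 0 ≤ z ∧ z < r ∧ 0 ≤ δ ∧
      n = x * q * r + y * r * p + z * p * q + δ * p * q * r
  then 1 else 0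


def IERep (p q r : ℕ) (n x y z δ : ℤ) : Prop :=
  0 ≤ x ∧ x < p ∧ 0 ≤ y ∧ y < q ∧ 0 ≤ z ∧ z < r ∧
    n = x * q * r + y * r * p + z * p * q + δ * p * q * r

lemma chi_neg (p q r : ℕ) {n : ℤ} (hn : n < 0) : chi p q r n = 0 := by
  rw [chi, if_neg]
  rintro ⟨x, y, z, δ, hx0, hxp, hy0, hyq, hz0, hzr, hδ, hn'⟩
  have hq' : (0:ℤ) ≤ q := by positivity
  have hr' : (0:ℤ) ≤ r := by positivity
  have hp' : (0:ℤ) ≤ p := by positivity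
  nlinarith [mul_nonneg (mul_nonneg hx0 hq') hr', mul_nonneg (mul_nonneg hy0 hr') hp',
    mul_nonneg (mul_nonneg hz0 hp') hq', mul_nonneg (mul_nonneg (mul_nonneg hδ hp') hq') hr']

lemma ex_coord (a m n : ℤ) (ha : 0 < a) (h : IsCoprime m a) :
    ∃ x : ℤ, 0 ≤ x ∧ x < a ∧ a ∣ n - x * m := by
  obtain ⟨u, v, huv⟩ := h
  refine ⟨(n * u) % a, Int.emod_nonneg _ ha.ne', Int.emod_lt_of_pos _ ha, ?_⟩
  have h1 : a ∣ n * u - (n * u) % a := Int.dvd_self_sub_of_emod_eq rfl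
  have h2 : n - ((n * u) % a) * m = (n * v) * a + (n * u - (n * u) % a) * m := by
    linear_combination (-n) * huv
  rw [h2]
  exact dvd_add (dvd_mul_left _ _) (h1.mul_right m)

section
variable {p q r : ℕ} (hp : 3 ≤ p) (hq : 3 ≤ q) (hr : 3 ≤ r)
  (hpq : Nat.Coprime p q) (hqr : Nat.Coprime q r) (hrp : Nat.Coprime r p)

include hp hq hr hpq hqr hrp

lemma exists_rep (n : ℤ) : ∃ x y z δ : ℤ, IERep p q r n x y z δ := by
  have hp' : (0:ℤ) < p := by exact_mod_cast (by omega : 0 < p)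
  have hq' : (0:ℤ) < q := by exact_mod_cast (by omega : 0 < q)
  have hr' : (0:ℤ) < r := by exact_mod_cast (by omega : 0 < r)
  have cpq : IsCoprime (p:ℤ) (q:ℤ) := Nat.isCoprime_iff_coprime.mpr hpq
  have cqr : IsCoprime (q:ℤ) (r:ℤ) := Nat.isCoprime_iff_coprime.mpr hqr
  have crp : IsCoprime (r:ℤ) (p:ℤ) := Nat.isCoprime_iff_coprime.mpr hrp
  obtain ⟨x, hx0, hxp, hxd⟩ := ex_coord (p:ℤ) ((q:ℤ) * r) n hp' (cpq.symm.mul_left crp)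
  obtain ⟨y, hy0, hyq, hyd⟩ := ex_coord (q:ℤ) ((r:ℤ) * p) n hq' (cqr.symm.mul_left cpq)
  obtain ⟨z, hz0, hzr, hzd⟩ := ex_coord (r:ℤ) ((p:ℤ) * q) n hr' (crp.symm.mul_left cqr)
  set M : ℤ := n - x * q * r - y * r * p - z * p * q with hM
  have hpm : (p:ℤ) ∣ M := by
    have : M = (n - x * ((q:ℤ) * r)) - (y * r) * p - (z * q) * p := by ring
    rw [this]
    exact dvd_sub (dvd_sub hxd (dvd_mul_left _ _)) (dvd_mul_left _ _)
  have hqm : (q:ℤ) ∣ M := by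
    have : M = (n - y * ((r:ℤ) * p)) - (x * r) * q - (z * p) * q := by ring
    rw [this]
    exact dvd_sub (dvd_sub hyd (dvd_mul_left _ _)) (dvd_mul_left _ _)
  have hrm : (r:ℤ) ∣ M := by
    have : M = (n - z * ((p:ℤ) * q)) - (x * q) * r - (y * p) * r := by ring
    rw [this]
    exact dvd_sub (dvd_sub hzd (dvd_mul_left _ _)) (dvd_mul_left _ _)
  have hpqr : ((p:ℤ) * q * r) ∣ M := by
    have c1 : IsCoprime ((p:ℤ) * q) (r:ℤ) := crp.symm.mul_left cqr
    exact c1.mul_dvd (cpq.mul_dvd hpm hqm) hrm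
  obtain ⟨δ, hδ⟩ := hpqr
  exact ⟨x, y, z, δ, hx0, hxp, hy0, hyq, hz0, hzr, by rw [hM] at hδ; linarith [hδ]⟩

lemma rep_unique {n x y z δ x' y' z' δ' : ℤ}
    (h : IERep p q r n x y z δ) (h' : IERep p q r n x' y' z' δ') :
    x = x' ∧ y = y' ∧ z = z' ∧ δ = δ' := by
  have hp' : (0:ℤ) < p := by exact_mod_cast (by omega : 0 < p)
  have hq' : (0:ℤ) < q := by exact_mod_cast (by omega : 0 < q)
  have hr' : (0:ℤ) < r := by exact_mod_cast (by omega : 0 < r)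
  have cpq : IsCoprime (p:ℤ) (q:ℤ) := Nat.isCoprime_iff_coprime.mpr hpq
  have cqr : IsCoprime (q:ℤ) (r:ℤ) := Nat.isCoprime_iff_coprime.mpr hqr
  have crp : IsCoprime (r:ℤ) (p:ℤ) := Nat.isCoprime_iff_coprime.mpr hrp
  obtain ⟨hx0, hxp, hy0, hyq, hz0, hzr, he⟩ := h
  obtain ⟨hx0', hxp', hy0', hyq', hz0', hzr', he'⟩ := h'
  have hpx : (p:ℤ) ∣ ((q:ℤ) * r) * (x - x') := by
    have h2 : ((q:ℤ) * r) * (x - x') = ((y' - y) * r + (z' - z) * q + (δ' - δ) * q * r) * p := by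
      linear_combination he' - he
    exact h2 ▸ dvd_mul_left _ _
  have hqy : (q:ℤ) ∣ ((r:ℤ) * p) * (y - y') := by
    have h2 : ((r:ℤ) * p) * (y - y') = ((x' - x) * r + (z' - z) * p + (δ' - δ) * r * p) * q := by
      linear_combination he' - he
    exact h2 ▸ dvd_mul_left _ _
  have hrz : (r:ℤ) ∣ ((p:ℤ) * q) * (z - z') := by
    have h2 : ((p:ℤ) * q) * (z - z') = ((x' - x) * q + (y' - y) * p + (δ' - δ) * p * q) * r := by
      linear_combination he' - he
    exact h2 ▸ dvd_mul_left _ _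
  have hx : x = x' := by
    have hd : (p:ℤ) ∣ (x - x') := (cpq.mul_right crp.symm).dvd_of_dvd_mul_left hpx
    have := Int.eq_zero_of_abs_lt_dvd hd (abs_lt.mpr ⟨by linarith, by linarith⟩)
    linarith
  have hy : y = y' := by
    have hd : (q:ℤ) ∣ (y - y') := (cqr.mul_right cpq.symm).dvd_of_dvd_mul_left hqy
    have := Int.eq_zero_of_abs_lt_dvd hd (abs_lt.mpr ⟨by linarith, by linarith⟩)
    linarith
  have hz : z = z' := by
    have hd : (r:ℤ) ∣ (z - z') := (crp.mul_right cqr.symm).dvd_of_dvd_mul_left hrz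
    have := Int.eq_zero_of_abs_lt_dvd hd (abs_lt.mpr ⟨by linarith, by linarith⟩)
    linarith
  subst hx; subst hy; subst hz
  refine ⟨rfl, rfl, rfl, ?_⟩
  have h3 : (δ - δ') * ((p:ℤ) * q * r) = 0 := by linear_combination he' - he
  have h0 : ((p:ℤ) * q * r) ≠ 0 := by positivity
  rcases mul_eq_zero.mp h3 with h | h
  · linarith
  · exact absurd h h0

lemma chi_of_rep {n x y z δ : ℤ} (h : IERep p q r n x y z δ) :
    chi p q r n = if 0 ≤ δ then 1 else 0 := by
  obtain ⟨hx0, hxp, hy0, hyq, hz0, hzr, he⟩ := h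
  by_cases hδ : 0 ≤ δ
  · rw [if_pos hδ, chi, if_pos ⟨x, y, z, δ, hx0, hxp, hy0, hyq, hz0, hzr, hδ, he⟩]
  · rw [if_neg hδ, chi, if_neg]
    rintro ⟨x', y', z', δ', hx0', hxp', hy0', hyq', hz0', hzr', hδ', he'⟩
    have := rep_unique hp hq hr hpq hqr hrp
      (⟨hx0, hxp, hy0, hyq, hz0, hzr, he⟩ : IERep p q r n x y z δ)
      (⟨hx0', hxp', hy0', hyq', hz0', hzr', he'⟩ : IERep p q r n x' y' z' δ')
    omega

omit hp hq hr hpq hqr hrp in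
lemma rep_shift_x (hp : 3 ≤ p) {n x y z δ : ℤ} (h : IERep p q r n x y z δ) :
    IERep p q r (n - q * r) (if x = 0 then (p:ℤ) - 1 else x - 1) y z
      (if x = 0 then δ - 1 else δ) := by
  obtain ⟨hx0, hxp, hy0, hyq, hz0, hzr, he⟩ := h
  have hp' : (1:ℤ) ≤ p := by exact_mod_cast (by omega : 1 ≤ p)
  by_cases hx : x = 0
  · rw [if_pos hx, if_pos hx]
    rw [hx] at he
    exact ⟨by linarith, by linarith, hy0, hyq, hz0, hzr, by linear_combination he⟩
  · rw [if_neg hx, if_neg hx]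
    exact ⟨by omega, by omega, hy0, hyq, hz0, hzr, by linear_combination he⟩

omit hp hq hr hpq hqr hrp in
lemma rep_shift_y (hq : 3 ≤ q) {n x y z δ : ℤ} (h : IERep p q r n x y z δ) :
    IERep p q r (n - r * p) x (if y = 0 then (q:ℤ) - 1 else y - 1) z
      (if y = 0 then δ - 1 else δ) := by
  obtain ⟨hx0, hxp, hy0, hyq, hz0, hzr, he⟩ := h
  have hq' : (1:ℤ) ≤ q := by exact_mod_cast (by omega : 1 ≤ q)
  by_cases hy : y = 0
  · rw [if_pos hy, if_pos hy]
    rw [hy] at he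
    exact ⟨hx0, hxp, by linarith, by linarith, hz0, hzr, by linear_combination he⟩
  · rw [if_neg hy, if_neg hy]
    exact ⟨hx0, hxp, by omega, by omega, hz0, hzr, by linear_combination he⟩

omit hp hq hr hpq hqr hrp in
lemma rep_shift_z (hr : 3 ≤ r) {n x y z δ : ℤ} (h : IERep p q r n x y z δ) :
    IERep p q r (n - p * q) x y (if z = 0 then (r:ℤ) - 1 else z - 1)
      (if z = 0 then δ - 1 else δ) := by
  obtain ⟨hx0, hxp, hy0, hyq, hz0, hzr, he⟩ := h
  have hr' : (1:ℤ) ≤ r := by exact_mod_cast (by omega : 1 ≤ r)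
  by_cases hz : z = 0
  · rw [if_pos hz, if_pos hz]
    rw [hz] at he
    exact ⟨hx0, hxp, hy0, hyq, by linarith, by linarith, by linear_combination he⟩
  · rw [if_neg hz, if_neg hz]
    exact ⟨hx0, hxp, hy0, hyq, by omega, by omega, by linear_combination he⟩

omit hp hq hr hpq hqr hrp in
lemma rep_multiple (hp : 3 ≤ p) (hq : 3 ≤ q) (hr : 3 ≤ r) (k : ℤ) :
    IERep p q r (k * (p * q * r)) 0 0 0 k := by
  refine ⟨le_refl 0, ?_, le_refl 0, ?_, le_refl 0, ?_, by ring⟩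
  · exact_mod_cast (by omega : (0:ℤ) < p)
  · exact_mod_cast (by omega : (0:ℤ) < q)
  · exact_mod_cast (by omega : (0:ℤ) < r)

set_option maxHeartbeats 1000000 in
lemma keyK (n : ℤ) :
    chi p q r n - chi p q r (n - q * r) - chi p q r (n - r * p) - chi p q r (n - p * q)
      + chi p q r (n - q * r - r * p) + chi p q r (n - q * r - p * q)
      + chi p q r (n - r * p - p * q) - chi p q r (n - q * r - r * p - p * q)
    = (if n = 0 then 1 else 0) - 2 * (if n = (p:ℤ) * q * r then 1 else 0)
      + (if n = 2 * ((p:ℤ) * q * r) then 1 else 0) := by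
  obtain ⟨x, y, z, δ, h⟩ := exists_rep hp hq hr hpq hqr hrp n
  -- chi values of the 8 shifted points
  have h100 := rep_shift_x hp h
  have h010 := rep_shift_y hq h
  have h001 := rep_shift_z hr h
  have h110 := rep_shift_y hq h100
  have h101 := rep_shift_z hr h100
  have h011 := rep_shift_z hr h010
  have h111 := rep_shift_z hr h110
  have c000 := chi_of_rep hp hq hr hpq hqr hrp h
  have c100 := chi_of_rep hp hq hr hpq hqr hrp h100
  have c010 := chi_of_rep hp hq hr hpq hqr hrp h010
  have c001 := chi_of_rep hp hq hr hpq hqr hrp h001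
  have c110 := chi_of_rep hp hq hr hpq hqr hrp h110
  have c101 := chi_of_rep hp hq hr hpq hqr hrp h101
  have c011 := chi_of_rep hp hq hr hpq hqr hrp h011
  have c111 := chi_of_rep hp hq hr hpq hqr hrp h111
  have e0 : n = 0 ↔ (x = 0 ∧ y = 0 ∧ z = 0 ∧ δ = 0) := by
    constructor
    · intro h0
      have := rep_unique hp hq hr hpq hqr hrp (h0 ▸ h)
        (by simpa using rep_multiple hp hq hr (0:ℤ))
      exact this
    · rintro ⟨rfl, rfl, rfl, rfl⟩
      simpa using h.2.2.2.2.2.2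
  have e1 : n = (p:ℤ) * q * r ↔ (x = 0 ∧ y = 0 ∧ z = 0 ∧ δ = 1) := by
    constructor
    · intro h0
      have := rep_unique hp hq hr hpq hqr hrp (h0 ▸ h)
        (by simpa using rep_multiple hp hq hr (1:ℤ))
      exact this
    · rintro ⟨rfl, rfl, rfl, rfl⟩
      have := h.2.2.2.2.2.2; linarith
  have e2 : n = 2 * ((p:ℤ) * q * r) ↔ (x = 0 ∧ y = 0 ∧ z = 0 ∧ δ = 2) := by
    constructor
    · intro h0
      have := rep_unique hp hq hr hpq hqr hrp (h0 ▸ h)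
        (rep_multiple hp hq hr (2:ℤ))
      exact this
    · rintro ⟨rfl, rfl, rfl, rfl⟩
      have := h.2.2.2.2.2.2; linarith
  rw [c000, c100, c010, c001, c110, c101, c011, c111]
  simp only [e0, e1, e2]
  by_cases hx : x = 0 <;> by_cases hy : y = 0 <;> by_cases hz : z = 0 <;>
    simp only [hx, hy, hz] <;> norm_num <;> split_ifs <;> omega

end

local notation "Xs" => (PowerSeries.X : PowerSeries ℤ)

noncomputable def Aps (p q r : ℕ) : PowerSeries ℤ := PowerSeries.mk fun n => chi p q r n

noncomputable def cfun (p q r : ℕ) (n : ℤ) : ℤ :=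
  chi p q r n - chi p q r (n - q) - chi p q r (n - r) + chi p q r (n - q - r)

lemma coeff_Aps_mul_pow (p q r : ℕ) (k n : ℕ) :
    PowerSeries.coeff n (Aps p q r * Xs ^ k) = chi p q r ((n : ℤ) - k) := by
  rw [PowerSeries.coeff_mul_X_pow']
  split_ifs with h
  · rw [Aps, PowerSeries.coeff_mk, Nat.cast_sub h]
  · exact (chi_neg p q r (by push_cast; omega)).symm

lemma one_sub_X_pow_ne_zero (k : ℕ) (hk : 0 < k) : (1 - Xs ^ k : PowerSeries ℤ) ≠ 0 := by
  intro h
  have h2 := congrArg (PowerSeries.constantCoeff) h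
  simp [zero_pow hk.ne'] at h2

lemma coeff_B (p q r : ℕ) (n : ℕ) :
    PowerSeries.coeff n (Aps p q r * ((1 - Xs ^ q) * (1 - Xs ^ r))) = cfun p q r n := by
  have hexp : Aps p q r * ((1 - Xs ^ q) * (1 - Xs ^ r))
      = Aps p q r * Xs ^ 0 - Aps p q r * Xs ^ q - Aps p q r * Xs ^ r
        + Aps p q r * Xs ^ (q + r) := by ring
  rw [hexp, cfun]
  simp only [map_sub, map_add, coeff_Aps_mul_pow, Nat.cast_add, Nat.cast_zero, sub_zero,
    ← sub_sub]

section
variable {p q r : ℕ} (hp : 3 ≤ p) (hq : 3 ≤ q) (hr : 3 ≤ r)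
  (hpq : Nat.Coprime p q) (hqr : Nat.Coprime q r) (hrp : Nat.Coprime r p)

include hp hq hr hpq hqr hrp

lemma Aps_mul :
    Aps p q r * ((1 - Xs ^ (q * r)) * (1 - Xs ^ (r * p)) * (1 - Xs ^ (p * q)))
      = 1 - 2 * Xs ^ (p * q * r) + Xs ^ (2 * (p * q * r)) := by
  ext n
  have hexp : Aps p q r * ((1 - Xs ^ (q * r)) * (1 - Xs ^ (r * p)) * (1 - Xs ^ (p * q)))
      = Aps p q r * Xs ^ 0 - Aps p q r * Xs ^ (q * r) - Aps p q r * Xs ^ (r * p)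
        - Aps p q r * Xs ^ (p * q)
        + Aps p q r * Xs ^ (q * r + r * p) + Aps p q r * Xs ^ (q * r + p * q)
        + Aps p q r * Xs ^ (r * p + p * q)
        - Aps p q r * Xs ^ (q * r + r * p + p * q) := by ring
  have hexp2 : (1 - 2 * Xs ^ (p * q * r) + Xs ^ (2 * (p * q * r)) : PowerSeries ℤ)
      = 1 - Xs ^ (p * q * r) - Xs ^ (p * q * r) + Xs ^ (2 * (p * q * r)) := by ring
  rw [hexp, hexp2]
  simp only [map_sub, map_add, coeff_Aps_mul_pow, PowerSeries.coeff_one,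
    PowerSeries.coeff_X_pow, Nat.cast_add, Nat.cast_zero, Nat.cast_mul, sub_zero, ← sub_sub]
  have hK := keyK hp hq hr hpq hqr hrp (n : ℤ)
  have i0 : ((n : ℤ) = 0) ↔ (n = 0) := by exact_mod_cast Iff.rfl
  have i1 : ((n : ℤ) = (p:ℤ) * q * r) ↔ (n = p * q * r) := by exact_mod_cast Iff.rfl
  have i2 : ((n : ℤ) = 2 * ((p:ℤ) * q * r)) ↔ (n = 2 * (p * q * r)) := by
    exact_mod_cast Iff.rfl
  simp only [i0, i1, i2] at hK
  push_cast at hK ⊢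
  rw [hK]
  split_ifs <;> omega

lemma star (Q : Polynomial ℤ) (hQ : Q * incexcD p q r = incexcN p q r) :
    (Q : PowerSeries ℤ) * (1 - Xs ^ (p * q * r))
      = Aps p q r * ((1 - Xs ^ q) * (1 - Xs ^ r)) * (∑ i ∈ Finset.range p, Xs ^ i) := by
  have hQ' : (Q : PowerSeries ℤ) *
      ((Xs ^ (p*q) - 1) * (Xs ^ (q*r) - 1) * (Xs ^ (r*p) - 1) * (Xs - 1))
      = (Xs ^ (p*q*r) - 1) * (Xs ^ p - 1) * (Xs ^ q - 1) * (Xs ^ r - 1) := by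
    have h := congrArg (Polynomial.coeToPowerSeries.ringHom (R := ℤ)) hQ
    simpa only [incexcD, incexcN, map_mul, map_sub, map_pow, map_one,
      Polynomial.coeToPowerSeries.ringHom_apply, Polynomial.coe_X] using h
  have hQD : (Q : PowerSeries ℤ) *
      ((1 - Xs ^ (p*q)) * (1 - Xs ^ (q*r)) * (1 - Xs ^ (r*p)) * (1 - Xs))
      = (1 - Xs ^ (p*q*r)) * (1 - Xs ^ p) * (1 - Xs ^ q) * (1 - Xs ^ r) := by
    linear_combination hQ'
  have hP : (∑ i ∈ Finset.range p, Xs ^ i) * (1 - Xs) = 1 - Xs ^ p := by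
    linear_combination (-1 : PowerSeries ℤ) * geom_sum_mul Xs p
  have hA := Aps_mul hp hq hr hpq hqr hrp
  have hD0 : ((1 - Xs ^ (p*q)) * (1 - Xs ^ (q*r)) * (1 - Xs ^ (r*p)) * (1 - Xs) :
      PowerSeries ℤ) ≠ 0 := by
    have h1 := one_sub_X_pow_ne_zero (p*q) (by positivity)
    have h2 := one_sub_X_pow_ne_zero (q*r) (by positivity)
    have h3 := one_sub_X_pow_ne_zero (r*p) (by positivity)
    have h4 := one_sub_X_pow_ne_zero 1 one_pos
    rw [pow_one] at h4
    exact mul_ne_zero (mul_ne_zero (mul_ne_zero h1 h2) h3) h4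
  apply mul_right_cancel₀ hD0
  have e1 : (Q : PowerSeries ℤ) * (1 - Xs ^ (p*q*r)) *
      ((1 - Xs ^ (p*q)) * (1 - Xs ^ (q*r)) * (1 - Xs ^ (r*p)) * (1 - Xs))
      = (1 - Xs ^ (p*q*r)) *
        ((1 - Xs ^ (p*q*r)) * (1 - Xs ^ p) * (1 - Xs ^ q) * (1 - Xs ^ r)) := by
    rw [← hQD]; ring
  have e2 : Aps p q r * ((1 - Xs ^ q) * (1 - Xs ^ r)) * (∑ i ∈ Finset.range p, Xs ^ i) *
      ((1 - Xs ^ (p*q)) * (1 - Xs ^ (q*r)) * (1 - Xs ^ (r*p)) * (1 - Xs))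
      = (Aps p q r * ((1 - Xs ^ (q*r)) * (1 - Xs ^ (r*p)) * (1 - Xs ^ (p*q)))) *
        ((1 - Xs ^ q) * (1 - Xs ^ r)) * ((∑ i ∈ Finset.range p, Xs ^ i) * (1 - Xs)) := by
    ring
  rw [e1, e2, hA, hP]
  ring

end

theorem stmt_9 (p q r : ℕ) (hp : 3 ≤ p) (hq : 3 ≤ q) (hr : 3 ≤ r)
    (hpq : Nat.Coprime p q) (hqr : Nat.Coprime q r) (hrp : Nat.Coprime r p)
    (Q : Polynomial ℤ) (hQ : Q * incexcD p q r = incexcN p q r)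
    (m : ℤ) (hm : m < (p : ℤ) * q * r) :
    coeffZ Q m =
      ∑ i ∈ Finset.range p,
        (chi p q r (m - i) - chi p q r (m - i - q) - chi p q r (m - i - r) +
          chi p q r (m - i - q - r)) := by
  rcases le_or_gt 0 m with hm0 | hm0
  · have hstar := star hp hq hr hpq hqr hrp Q hQ
    set n := m.toNat with hn
    have hmn : (n : ℤ) = m := Int.toNat_of_nonneg hm0
    have hc := congrArg (PowerSeries.coeff n) hstar
    have hnlt : ¬ (p * q * r ≤ n) := by
      intro hcon
      have h2 : ((p * q * r : ℕ) : ℤ) ≤ (n : ℤ) := by exact_mod_cast hcon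
      push_cast at h2
      rw [hmn] at h2
      linarith
    rw [mul_sub, mul_one, map_sub, PowerSeries.coeff_mul_X_pow', if_neg hnlt, sub_zero,
      Polynomial.coeff_coe, Finset.mul_sum, map_sum] at hc
    have hterm : ∀ i ∈ Finset.range p,
        PowerSeries.coeff n (Aps p q r * ((1 - Xs ^ q) * (1 - Xs ^ r)) * Xs ^ i)
          = cfun p q r ((n : ℤ) - i) := by
      intro i _
      rw [PowerSeries.coeff_mul_X_pow']
      split_ifs with h
      · rw [coeff_B, Nat.cast_sub h]
      · symm
        rw [cfun, chi_neg p q r (by omega), chi_neg p q r (by omega),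
          chi_neg p q r (by omega), chi_neg p q r (by omega)]
        ring
    rw [Finset.sum_congr rfl hterm] at hc
    rw [coeffZ, if_pos hm0, hc]
    exact Finset.sum_congr rfl fun i _ => by rw [cfun, hmn]
  · rw [coeffZ, if_neg (not_le.mpr hm0)]
    symm
    apply Finset.sum_eq_zero
    intro i _
    rw [chi_neg p q r (by omega), chi_neg p q r (by omega), chi_neg p q r (by omega),
      chi_neg p q r (by omega)]
    ring
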